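/- The simplicial boundary b = Σ_{i=0}^{p} (-1)^i d_i on the secondary Hochschild chain complex C̄_•(A,B,ε) squares to zero: b ∘ b = 0. -/

import Mathlib

open Finset

variable {k A B : Type} [CommRing k] [Ring A] [Algebra k A] [CommRing B] [Algebra k B]

/-- A (set-level) secondary Hochschild `n`-cochain for a triple `(A, B, ε)`: a function of
the entries of an upper-triangular matrix with diagonal `a 1, …, a n ∈ A` and strictly
upper entries `b s t ∈ B` (`1 ≤ s < t ≤ n`).  Elements of
`C^n((A,B,ε);A) = Hom_k(A^{⊗n} ⊗ B^{⊗ n(n-1)/2}, A)` are determined by such functions. -/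
abbrev SecCochain (A B : Type) := (ℕ → A) → (ℕ → ℕ → B) → A

/-- The preimage, under collapsing the block `[i, i+m-1]` to the single index `i`, of an
index `s`; used to contract the `B`-entries crossing an inserted block. -/
def preB (i m s : ℕ) : Finset ℕ :=
  if s < i then {s} else if s = i then Finset.Icc i (i + m - 1) else {s + m - 1}

/-- Staic's operadic insertion `f ∘ᵢ g` on secondary Hochschild cochains, where `g` has
degree `m`: `g` is evaluated on the `m × m` block starting at slot `i` and the crossing
`B`-entries are multiplied. -/
def compC (m i : ℕ) (f g : SecCochain A B) : SecCochain A B := fun a b =>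
  f (fun s => if s < i then a s
      else if s = i then g (fun u => a (u + i - 1)) (fun u v => b (u + i - 1) (v + i - 1))
      else a (s + m - 1))
    (fun s t => ∏ u ∈ preB i m s, ∏ v ∈ preB i m t, b u v)

/-- The multiplication `μ(a₁ ⊗ b ⊗ a₂) = ε(b) a₁ a₂` as a secondary Hochschild 2-cochain. -/
def muC (ε : B →ₐ[k] A) : SecCochain A B := fun a b => ε (b 1 2) * (a 1 * a 2)

/-- A generator of the secondary Hochschild chain module
`C̄_p(A,B,ε) = A^{⊗(p+1)} ⊗ B^{⊗ p(p+1)/2}`: an upper-triangular matrix with diagonal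
`a 0, …, a p ∈ A` and strictly upper entries `b s t ∈ B` (`0 ≤ s < t ≤ p`). -/
abbrev SecChain (A B : Type) := (ℕ → A) × (ℕ → ℕ → B)

/-- Two chain generators represent the same element of `C̄_p(A,B,ε)` iff their diagonal
entries agree for indices `≤ p` and their strictly upper entries agree for
`s < t ≤ p` (out-of-range values are irrelevant junk). -/
def EqUpTo (p : ℕ) (T T' : SecChain A B) : Prop :=
  (∀ s : ℕ, s ≤ p → T.1 s = T'.1 s) ∧
  (∀ s t : ℕ, s < t → t ≤ p → T.2 s t = T'.2 s t)

/-- The cyclic operator `t : M_p → M_p` on secondary Hochschild chains: the diagonal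
becomes `(a_p, a_0, …, a_{p-1})`, the new first row is `b_{0,p}, b_{1,p}, …, b_{p-1,p}`,
and the remaining entries are shifted: `b'_{s,t} = b_{s-1,t-1}`. -/
def cycC (p : ℕ) (T : SecChain A B) : SecChain A B :=
  (fun s => if s = 0 then T.1 p else T.1 (s - 1),
   fun s t => if s = 0 then T.2 (t - 1) p else T.2 (s - 1) (t - 1))

/-- The comp module action `f •ᵢ T` of a degree `m` secondary cochain on secondary chains:
`f` is evaluated on the block with diagonal `a_i, …, a_{i+m-1}` (inserted at slot `i`) and
the crossing `B`-entries are multiplied. -/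
def chainAct (m i : ℕ) (f : SecCochain A B) (T : SecChain A B) : SecChain A B :=
  (fun s => if s < i then T.1 s
      else if s = i then
        f (fun u => T.1 (i + u - 1)) (fun u v => T.2 (i + u - 1) (i + v - 1))
      else T.1 (s + m - 1),
   fun s t => ∏ u ∈ preB i m s, ∏ v ∈ preB i m t, T.2 u v)

/-- A set-level cochain genuinely lies in `C^m((A,B,ε);A)` only if it depends on the
matrix entries `a_u` (`1 ≤ u ≤ m`) and `b_{u,v}` (`1 ≤ u < v ≤ m`) alone. -/
def SecDependsOn (m : ℕ) (f : SecCochain A B) : Prop :=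
  ∀ (a a' : ℕ → A) (b b' : ℕ → ℕ → B),
    (∀ u : ℕ, 1 ≤ u → u ≤ m → a u = a' u) →
    (∀ u v : ℕ, 1 ≤ u → u < v → v ≤ m → b u v = b' u v) →
    f a b = f a' b'

/-- The `i`-th face of Staic's secondary Hochschild boundary `∂` on
`C̄_p(A,B,ε) → C̄_{p-1}(A,B,ε)`: for `i < p` it merges the diagonal entries `a_i, a_{i+1}`
into `ε(b_{i,i+1}) a_i a_{i+1}` and multiplies the corresponding `B`-entries; for `i = p`
it produces `ε(b_{0,p}) a_p a_0` in position `0` with first-row entries `b_{t,p} b_{0,t}`. -/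
def staicFace (ε : B →ₐ[k] A) (p i : ℕ) (T : SecChain A B) : SecChain A B :=
  if i < p then
    (fun s => if s < i then T.1 s
        else if s = i then ε (T.2 i (i + 1)) * (T.1 i * T.1 (i + 1))
        else T.1 (s + 1),
     fun s t => ∏ u ∈ preB i 2 s, ∏ v ∈ preB i 2 t, T.2 u v)
  else
    (fun s => if s = 0 then ε (T.2 0 p) * (T.1 p * T.1 0) else T.1 s,
     fun s t => if s = 0 then T.2 t p * T.2 0 t else T.2 s t)

/-- Generators of `C̄_p(A,B,ε)` up to the identification of in-range entries. -/
def chainSetoid (A B : Type) (p : ℕ) : Setoid (SecChain A B) :=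
  ⟨EqUpTo p,
   ⟨fun _ => ⟨fun _ _ => rfl, fun _ _ _ _ => rfl⟩,
    fun h => ⟨fun s hs => (h.1 s hs).symm, fun s t h1 h2 => (h.2 s t h1 h2).symm⟩,
    fun h h' => ⟨fun s hs => (h.1 s hs).trans (h'.1 s hs),
      fun s t h1 h2 => (h.2 s t h1 h2).trans (h'.2 s t h1 h2)⟩⟩⟩

/-- The set of elements of `C̄_p(A,B,ε)` represented by generators. -/
def QChain (A B : Type) (p : ℕ) := Quotient (chainSetoid A B p)

/-- The secondary Hochschild boundary `∂ = ∑_{i=0}^{p} (-1)^i dᵢ` of a generator of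
`C̄_p(A,B,ε)`, as a formal `k`-linear combination of generators of `C̄_{p-1}(A,B,ε)`. -/
noncomputable def bndC (ε : B →ₐ[k] A) (p : ℕ) (T : SecChain A B) : QChain A B (p - 1) →₀ k :=
  ∑ i ∈ Finset.range (p + 1),
    Finsupp.single (Quotient.mk (chainSetoid A B (p - 1)) (staicFace ε p i T)) ((-1 : k) ^ i)


lemma prod_preB_lt {M : Type} [CommMonoid M] {i s : ℕ} (h : s < i) (f : ℕ → M) :
    ∏ u ∈ preB i 2 s, f u = f s := by
  rw [preB, if_pos h, Finset.prod_singleton]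

lemma prod_preB_eq {M : Type} [CommMonoid M] {i s : ℕ} (h : s = i) (f : ℕ → M) :
    ∏ u ∈ preB i 2 s, f u = f i * f (i + 1) := by
  subst h
  rw [preB, if_neg (by omega), if_pos rfl]
  have h3 : Finset.Icc s (s + 2 - 1) = {s, s + 1} := by
    ext x; simp [Finset.mem_Icc]; omega
  rw [h3, Finset.prod_insert (by simp), Finset.prod_singleton]

lemma prod_preB_gt {M : Type} [CommMonoid M] {i s : ℕ} (h : i < s) (f : ℕ → M) :
    ∏ u ∈ preB i 2 s, f u = f (s + 1) := by
  rw [preB, if_neg (by omega), if_neg (by omega), Finset.prod_singleton]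
  congr 1

lemma tri (ε : B →ₐ[k] A) (hcent : ∀ (b : B) (a : A), ε b * a = a * ε b)
    (b1 b2 b3 : B) (x y z : A) :
    ε (b1 * b2) * (x * (ε b3 * (y * z))) = ε (b2 * b3) * (ε b1 * (x * y) * z) := by
  have h1 : x * (ε b3 * (y * z)) = ε b3 * (x * (y * z)) := by
    rw [← mul_assoc, ← hcent, mul_assoc]
  rw [map_mul, map_mul, h1]
  simp only [← mul_assoc, ← map_mul]
  rw [show b1 * b2 * b3 = b2 * b3 * b1 by ring]

lemma tri2 (ε : B →ₐ[k] A) (hcent : ∀ (b : B) (a : A), ε b * a = a * ε b)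
    (b1 b2 b3 : B) (x y z : A) :
    ε (b1 * b2) * (ε b3 * (x * y) * z) = ε (b3 * b1) * (x * (ε b2 * (y * z))) := by
  have h1 : x * (ε b2 * (y * z)) = ε b2 * (x * (y * z)) := by
    rw [← mul_assoc, ← hcent, mul_assoc]
  have h2 : ε b3 * (x * y) * z = ε b3 * (x * (y * z)) := by
    rw [mul_assoc, mul_assoc]
  rw [map_mul, map_mul, h1, h2]
  simp only [← mul_assoc, ← map_mul]
  rw [show b1 * b2 * b3 = b3 * b1 * b2 by ring]

set_option maxHeartbeats 2000000 in
lemma face_comm (ε : B →ₐ[k] A) (hcent : ∀ (b : B) (a : A), ε b * a = a * ε b)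
    (p i j : ℕ) (hji : j ≤ i) (hi : i ≤ p + 1) (T : SecChain A B) :
    EqUpTo p (staicFace ε (p + 1) j (staicFace ε (p + 2) (i + 1) T))
      (staicFace ε (p + 1) i (staicFace ε (p + 2) j T)) := by
  rcases Nat.lt_or_ge i (p + 1) with hip | hip
  · -- case A : all four faces are "normal" merges
    constructor
    · intro s hs
      simp (disch := omega) only [staicFace, if_pos, if_neg]
      rcases Nat.lt_trichotomy s j with h1 | h1 | h1 <;>
        rcases Nat.lt_trichotomy s i with h2 | h2 | h2 <;>
        first
        | omega
        | (simp (disch := omega) only [if_pos, if_neg, ite_true, ite_false,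
            prod_preB_lt, prod_preB_eq, prod_preB_gt]; done)
        | (obtain rfl : j = i := by omega
           simp (disch := omega) only [if_pos, if_neg, ite_true, ite_false,
             prod_preB_lt, prod_preB_eq, prod_preB_gt]
           exact tri ε hcent _ _ _ _ _ _)
    · intro s t hst htp
      simp (disch := omega) only [staicFace, if_pos, if_neg]
      rcases Nat.lt_trichotomy s j with h1 | h1 | h1 <;>
        rcases Nat.lt_trichotomy s i with h2 | h2 | h2 <;>
        rcases Nat.lt_trichotomy t j with h3 | h3 | h3 <;>
        rcases Nat.lt_trichotomy t i with h4 | h4 | h4 <;>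
        first
        | omega
        | (simp (disch := omega) only [if_pos, if_neg, ite_true, ite_false,
            prod_preB_lt, prod_preB_eq, prod_preB_gt]; first | done | ring1)
        | (subst_vars
           simp (disch := omega) only [if_pos, if_neg, ite_true, ite_false,
             prod_preB_lt, prod_preB_eq, prod_preB_gt]
           first | done | ring1)
  · -- case B/C : i = p + 1
    obtain rfl : i = p + 1 := by omega
    rcases Nat.lt_or_ge j (p + 1) with hj | hj
    · -- case B
      constructor
      · intro s hs
        simp (disch := omega) only [staicFace, if_pos, if_neg]
        rcases Nat.lt_trichotomy s j with h1 | h1 | h1 <;>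
          rcases eq_or_ne s 0 with h2 | h2 <;>
          rcases eq_or_ne j 0 with h3 | h3 <;>
          first
          | omega
          | (simp (disch := omega) only [if_pos, if_neg, ite_true, ite_false,
              prod_preB_lt, prod_preB_eq, prod_preB_gt]; done)
          | (subst_vars
             simp (disch := omega) only [if_pos, if_neg, ite_true, ite_false,
               prod_preB_lt, prod_preB_eq, prod_preB_gt]
             done)
          | (subst_vars
             simp (disch := omega) only [if_pos, if_neg, ite_true, ite_false,
               prod_preB_lt, prod_preB_eq, prod_preB_gt]
             exact tri2 ε hcent _ _ _ _ _ _)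
      · intro s t hst htp
        simp (disch := omega) only [staicFace, if_pos, if_neg]
        rcases Nat.lt_trichotomy s j with h1 | h1 | h1 <;>
          rcases Nat.lt_trichotomy t j with h3 | h3 | h3 <;>
          rcases eq_or_ne s 0 with h2 | h2 <;>
          rcases eq_or_ne j 0 with h4 | h4 <;>
          first
          | omega
          | (simp (disch := omega) only [if_pos, if_neg, ite_true, ite_false,
              prod_preB_lt, prod_preB_eq, prod_preB_gt]; first | done | ring1)
          | (subst_vars
             simp (disch := omega) only [if_pos, if_neg, ite_true, ite_false,
               prod_preB_lt, prod_preB_eq, prod_preB_gt]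
             first | done | ring1)
    · -- case C : j = i = p + 1
      obtain rfl : j = p + 1 := by omega
      constructor
      · intro s hs
        simp (disch := omega) only [staicFace, if_pos, if_neg]
        rcases eq_or_ne s 0 with h2 | h2 <;>
          first
          | (simp (disch := omega) only [if_pos, if_neg, ite_true, ite_false,
              prod_preB_lt, prod_preB_eq, prod_preB_gt]; done)
          | (subst_vars
             simp (disch := omega) only [if_pos, if_neg, ite_true, ite_false,
               prod_preB_lt, prod_preB_eq, prod_preB_gt]
             first
             | done
             | exact tri ε hcent _ _ _ _ _ _)
      · intro s t hst htp
        simp (disch := omega) only [staicFace, if_pos, if_neg]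
        rcases eq_or_ne s 0 with h2 | h2 <;>
          first
          | (simp (disch := omega) only [if_pos, if_neg, ite_true, ite_false,
              prod_preB_lt, prod_preB_eq, prod_preB_gt]; first | done | ring1)
          | (subst_vars
             simp (disch := omega) only [if_pos, if_neg, ite_true, ite_false,
               prod_preB_lt, prod_preB_eq, prod_preB_gt]
             first | done | ring1)

/-- the simplicial boundary `b = ∑_{i=0}^p (-1)^i dᵢ` of the secondary
Hochschild chain complex `C̄_•(A,B,ε)` squares to zero. -/
theorem secondary_boundary_squared_zero (ε : B →ₐ[k] A)
    (hcent : ∀ (b : B) (a : A), ε b * a = a * ε b) (p : ℕ) (T : SecChain A B) :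
    ∑ i ∈ Finset.range (p + 3),
        ((-1 : k) ^ i) • bndC ε (p + 1) (staicFace ε (p + 2) i T) = 0 := by
  classical
  have key : ∀ i j : ℕ, j ≤ i → i ≤ p + 1 →
      Quotient.mk (chainSetoid A B p) (staicFace ε (p + 1) j (staicFace ε (p + 2) (i + 1) T)) =
      Quotient.mk (chainSetoid A B p) (staicFace ε (p + 1) i (staicFace ε (p + 2) j T)) :=
    fun i j h1 h2 => Quotient.sound (face_comm ε hcent p i j h1 h2 T)
  have hb : ∀ i : ℕ, ((-1 : k) ^ i) • bndC ε (p + 1) (staicFace ε (p + 2) i T) =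
      ∑ j ∈ Finset.range (p + 2),
        Finsupp.single
          (Quotient.mk (chainSetoid A B p)
            (staicFace ε (p + 1) j (staicFace ε (p + 2) i T))) ((-1 : k) ^ (i + j)) := by
    intro i
    rw [bndC, Finset.smul_sum]
    refine Finset.sum_congr rfl fun j _ => ?_
    refine (Finsupp.smul_single _ _ _).trans ?_
    exact congrArg (Finsupp.single _) (by rw [smul_eq_mul, ← pow_add])
  simp only [hb]
  change (∑ i ∈ Finset.range (p + 3), ∑ j ∈ Finset.range (p + 2),
      Finsupp.single (Quotient.mk (chainSetoid A B p)
        (staicFace ε (p + 1) j (staicFace ε (p + 2) i T))) ((-1 : k) ^ (i + j)) :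
      Quotient (chainSetoid A B p) →₀ k) = 0
  rw [← Finset.sum_product']
  refine Finset.sum_involution
    (fun x _ => if x.2 < x.1 then (x.2, x.1 - 1) else (x.2 + 1, x.1)) ?_ ?_ ?_ ?_
  · rintro ⟨i, j⟩ hx
    simp only [Finset.mem_product, Finset.mem_range] at hx
    dsimp only
    by_cases h : j < i
    · rw [if_pos h]
      dsimp only
      have hkey := key (i - 1) j (by omega) (by omega)
      rw [show i - 1 + 1 = i from by omega] at hkey
      rw [hkey, ← Finsupp.single_add, show i + j = j + (i - 1) + 1 from by omega, pow_succ]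
      simp
    · rw [if_neg h]
      dsimp only
      have hkey := key j i (by omega) (by omega)
      rw [hkey, ← Finsupp.single_add, show j + 1 + i = i + j + 1 from by omega, pow_succ]
      simp
  · rintro ⟨i, j⟩ hx hne
    dsimp only
    by_cases h : j < i
    · rw [if_pos h]
      intro hc
      have h1 := congrArg Prod.fst hc
      have h2 := congrArg Prod.snd hc
      dsimp at h1 h2
      omega
    · rw [if_neg h]
      intro hc
      have h1 := congrArg Prod.fst hc
      have h2 := congrArg Prod.snd hc
      dsimp at h1 h2
      omega
  · rintro ⟨i, j⟩ hx
    simp only [Finset.mem_product, Finset.mem_range] at hx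
    dsimp only
    by_cases h : j < i
    · rw [if_pos h]
      simp only [Finset.mem_product, Finset.mem_range]
      omega
    · rw [if_neg h]
      simp only [Finset.mem_product, Finset.mem_range]
      omega
  · rintro ⟨i, j⟩ hx
    dsimp only
    by_cases h : j < i
    · rw [if_pos h]
      dsimp only
      rw [if_neg (show ¬ (i - 1 < j) from by omega)]
      exact congrArg (·, j) (show i - 1 + 1 = i from by omega)
    · rw [if_neg h]
      dsimp only
      rw [if_pos (show i < j + 1 from by omega)]
      rfl
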